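/- Let m ≥ 3 be an integer and let A(m) be the dihedral Artin group on generators s, t. Let τ ∈ A(m) be the element represented by the alternating word sts⋯s of length m if m is odd, and of length m+1 if m is even. Then for all integers p and q, one has t^p·s^q ≠ τ and s^p·t^q ≠ τ in A(m). -/

import Mathlib

/-- The alternating product `x y x y ⋯` of length `m`. -/
def altElt {M : Type*} [Monoid M] (x y : M) (m : ℕ) : M :=
  ((List.range m).map (fun i => if i % 2 = 0 then x else y)).prod

/-- The single relation `Π(s,t;m) = Π(t,s;m)` of the dihedral Artin group, on the
two-element generating set `Bool`, where `s = false` and `t = true`. -/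
def dihedralArtinRels (m : ℕ) : Set (FreeGroup Bool) :=
  {altElt (FreeGroup.of false) (FreeGroup.of true) m *
    (altElt (FreeGroup.of true) (FreeGroup.of false) m)⁻¹}

/-- The dihedral Artin group `A(m) = ⟨s, t ∣ Π(s,t;m) = Π(t,s;m)⟩`. -/
abbrev DihedralArtinGroup (m : ℕ) := PresentedGroup (dihedralArtinRels m)

/-- The generator `s` of the dihedral Artin group. -/
def DihedralArtinGroup.s (m : ℕ) : DihedralArtinGroup m := PresentedGroup.of false

/-- The generator `t` of the dihedral Artin group. -/
def DihedralArtinGroup.t (m : ℕ) : DihedralArtinGroup m := PresentedGroup.of true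

lemma altElt_succ' {M : Type*} [Monoid M] (x y : M) (n : ℕ) :
    altElt x y (n + 1) = altElt x y n * (if n % 2 = 0 then x else y) := by
  simp [altElt, List.range_succ]

lemma altElt_two_mul {M : Type*} [Monoid M] (x y : M) (k : ℕ) :
    altElt x y (2 * k) = (x * y) ^ k := by
  induction k with
  | zero => simp [altElt]
  | succ k ih =>
      rw [show 2 * (k + 1) = (2 * k + 1) + 1 by ring, altElt_succ', altElt_succ', ih]
      have h1 : (2 * k) % 2 = 0 := by omega
      have h2 : (2 * k + 1) % 2 = 1 := by omega
      rw [h1, h2]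
      simp [pow_succ, mul_assoc]

lemma altElt_two_mul_add_one {M : Type*} [Monoid M] (x y : M) (k : ℕ) :
    altElt x y (2 * k + 1) = (x * y) ^ k * x := by
  rw [altElt_succ', altElt_two_mul]
  simp [Nat.mul_mod_right]

lemma altElt_of_even {M : Type*} [Monoid M] (x y : M) {n : ℕ} (h : n % 2 = 0) :
    altElt x y n = (x * y) ^ (n / 2) := by
  conv_lhs => rw [show n = 2 * (n / 2) by omega]
  rw [altElt_two_mul]

lemma altElt_of_odd {M : Type*} [Monoid M] (x y : M) {n : ℕ} (h : n % 2 = 1) :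
    altElt x y n = (x * y) ^ (n / 2) * x := by
  conv_lhs => rw [show n = 2 * (n / 2) + 1 by omega]
  rw [altElt_two_mul_add_one]

lemma map_altElt {M N : Type*} [Monoid M] [Monoid N] (φ : M →* N) (x y : M) (n : ℕ) :
    φ (altElt x y n) = altElt (φ x) (φ y) n := by
  simp [altElt, map_list_prod, List.map_map, Function.comp_def, apply_ite]

open DihedralGroup in
lemma sr_inv {n : ℕ} (i : ZMod n) : (sr i)⁻¹ = sr i :=
  inv_eq_of_mul_eq_one_right (sr_mul_self i)

open DihedralGroup in
lemma sr_zpow {n : ℕ} (i : ZMod n) (p : ℤ) :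
    (sr i) ^ p = 1 ∨ (sr i) ^ p = sr i := by
  rcases Int.even_or_odd p with ⟨c, rfl⟩ | ⟨c, rfl⟩
  · left
    rw [show c + c = 2 * c by ring, zpow_mul]
    have : (sr i : DihedralGroup n) ^ (2 : ℤ) = 1 := by
      rw [zpow_two, sr_mul_self]
    rw [this, one_zpow]
  · right
    rw [zpow_add, zpow_mul, zpow_one]
    have : (sr i : DihedralGroup n) ^ (2 : ℤ) = 1 := by
      rw [zpow_two, sr_mul_self]
    rw [this, one_zpow, one_mul]

theorem dihedralArtin_ne_tau (m : ℕ) (hm : 3 ≤ m)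
    (τ : DihedralArtinGroup m)
    (hτ : τ = altElt (DihedralArtinGroup.s m) (DihedralArtinGroup.t m)
      (if Odd m then m else m + 1)) :
    ∀ p q : ℤ,
      (DihedralArtinGroup.t m) ^ p * (DihedralArtinGroup.s m) ^ q ≠ τ ∧
      (DihedralArtinGroup.s m) ^ p * (DihedralArtinGroup.t m) ^ q ≠ τ := by
  haveI : NeZero m := ⟨by omega⟩
  classical
  -- the map to the dihedral group
  set f : Bool → DihedralGroup m := fun b => DihedralGroup.sr (if b then 1 else 0) with hf
  have hr1 : (DihedralGroup.r 1 : DihedralGroup m) ^ m = 1 := DihedralGroup.r_one_pow_n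
  have hrel : ∀ r ∈ dihedralArtinRels m, FreeGroup.lift f r = 1 := by
    intro r hr
    rcases hr with rfl
    have hf0 : f false = DihedralGroup.sr 0 := rfl
    have hf1 : f true = DihedralGroup.sr 1 := rfl
    rw [map_mul, map_inv, map_altElt, map_altElt, FreeGroup.lift_apply_of, FreeGroup.lift_apply_of,
      hf0, hf1]
    have hst : (DihedralGroup.sr 0 : DihedralGroup m) * DihedralGroup.sr 1 =
        DihedralGroup.r 1 := by rw [DihedralGroup.sr_mul_sr, sub_zero]
    have hts : (DihedralGroup.sr 1 : DihedralGroup m) * DihedralGroup.sr 0 =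
        (DihedralGroup.r 1)⁻¹ := by
      rw [DihedralGroup.sr_mul_sr, zero_sub]
      exact (inv_eq_of_mul_eq_one_right (by
        rw [DihedralGroup.r_mul_r, show (1 : ZMod m) + -1 = 0 by ring,
          ← DihedralGroup.one_def])).symm
    rcases Nat.even_or_odd m with he | ho
    · have h0 : m % 2 = 0 := Nat.even_iff.mp he
      rw [altElt_of_even _ _ h0, altElt_of_even _ _ h0, hst, hts, inv_pow, inv_inv,
        ← pow_add, show m / 2 + m / 2 = m by omega, hr1]
    · have h1 : m % 2 = 1 := Nat.odd_iff.mp ho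
      rw [altElt_of_odd _ _ h1, altElt_of_odd _ _ h1, hst, hts, inv_pow, mul_inv_rev,
        inv_inv, sr_inv, DihedralGroup.r_one_pow, DihedralGroup.r_mul_sr,
        DihedralGroup.sr_mul_r]
      rw [DihedralGroup.sr_mul_sr]
      have hcast : ((1 : ZMod m) + (m / 2 : ℕ) - ((0 : ZMod m) - (m / 2 : ℕ)))
          = ((m : ℕ) : ZMod m) := by
        have h2 : ((m : ℕ) : ZMod m) = ((2 * (m / 2) + 1 : ℕ) : ZMod m) :=
          congrArg _ (by omega)
        rw [h2]
        push_cast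
        ring
      rw [hcast, ZMod.natCast_self, ← DihedralGroup.one_def]
  set φ : DihedralArtinGroup m →* DihedralGroup m := PresentedGroup.toGroup hrel with hφ
  have hφs : φ (DihedralArtinGroup.s m) = DihedralGroup.sr 0 := by
    rw [hφ, DihedralArtinGroup.s, PresentedGroup.toGroup.of]; rfl
  have hφt : φ (DihedralArtinGroup.t m) = DihedralGroup.sr 1 := by
    rw [hφ, DihedralArtinGroup.t, PresentedGroup.toGroup.of]; rfl
  -- value of φ τ
  have hk2 : 0 < m / 2 ∧ m / 2 + 1 < m := by omega
  set k : ℕ := m / 2 with hkdef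
  have hφτ : φ τ = DihedralGroup.sr (-(k : ZMod m)) := by
    rw [hτ, map_altElt, hφs, hφt]
    set L : ℕ := if Odd m then m else m + 1 with hL
    have hL1 : L % 2 = 1 := by
      rw [hL]; rcases Nat.even_or_odd m with he | ho
      · rw [if_neg (by simpa [Nat.odd_iff, Nat.even_iff] using he)]
        have := Nat.even_iff.mp he; omega
      · rw [if_pos ho]; exact Nat.odd_iff.mp ho
    have hL2 : L / 2 = k := by
      rw [hL]; rcases Nat.even_or_odd m with he | ho
      · rw [if_neg (by simpa [Nat.odd_iff, Nat.even_iff] using he)]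
        have := Nat.even_iff.mp he; omega
      · rw [if_pos ho]
    have hst : (DihedralGroup.sr 0 : DihedralGroup m) * DihedralGroup.sr 1 =
        DihedralGroup.r 1 := by rw [DihedralGroup.sr_mul_sr, sub_zero]
    rw [altElt_of_odd _ _ hL1, hL2, hst, DihedralGroup.r_one_pow,
      DihedralGroup.r_mul_sr, zero_sub]
  -- -(k) is not 0 and not 1 in ZMod m
  have hne0 : -(k : ZMod m) ≠ 0 := by
    intro h
    rw [neg_eq_zero, ZMod.natCast_eq_zero_iff] at h
    have := Nat.le_of_dvd hk2.1 h
    omega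
  have hne1 : -(k : ZMod m) ≠ 1 := by
    intro h
    have : ((k : ZMod m) + 1) = 0 := by rw [← h]; ring
    rw [show ((k : ZMod m) + 1) = ((k + 1 : ℕ) : ZMod m) by push_cast; ring,
      ZMod.natCast_eq_zero_iff] at this
    have := Nat.le_of_dvd (by omega) this
    omega
  intro p q
  constructor
  · intro h
    have := congrArg φ h
    rw [map_mul, map_zpow, map_zpow, hφs, hφt, hφτ] at this
    rcases sr_zpow (1 : ZMod m) p with h1 | h1 <;> rcases sr_zpow (0 : ZMod m) q with h2 | h2 <;>
      rw [h1, h2] at this <;>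
      simp_all [DihedralGroup.one_def, DihedralGroup.sr_mul_sr, -DihedralGroup.r_zero]
  · intro h
    have := congrArg φ h
    rw [map_mul, map_zpow, map_zpow, hφs, hφt, hφτ] at this
    rcases sr_zpow (0 : ZMod m) p with h1 | h1 <;> rcases sr_zpow (1 : ZMod m) q with h2 | h2 <;>
      rw [h1, h2] at this <;>
      simp_all [DihedralGroup.one_def, DihedralGroup.sr_mul_sr, -DihedralGroup.r_zero]
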